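/- arXiv:1805.08979 — 7 statements merged into one kernel-verified Lean document; each statement's English description precedes it below -/
import Mathlib

section
/- In the mining game with two miners of powers 2 and 1 and two coins each with reward 1, there is no exact potential function. Specifically, if H were an exact potential, summing the payoff differences along the 4-cycle of configurations (c1,c1)→(c1,c2)→(c2,c2)→(c2,c1)→(c1,c1) yields 2/3 ≠ 0, a contradiction. -/
open Finset Function

/-- Total mining power invested in coin `c` in configuration `s`. -/
noncomputable def totalPower {ι C : Type*} [Fintype ι] [DecidableEq C]
    (m : ι → ℝ) (s : ι → C) (c : C) : ℝ :=
  ∑ p, if s p = c then m p else 0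

/-- Revenue per unit of coin `c` in configuration `s`. -/
noncomputable def RPU {ι C : Type*} [Fintype ι] [DecidableEq C]
    (m : ι → ℝ) (F : C → ℝ) (s : ι → C) (c : C) : ℝ :=
  F c / totalPower m s c

/-- Payoff of miner `p` in configuration `s`. -/
noncomputable def payoff {ι C : Type*} [Fintype ι] [DecidableEq C]
    (m : ι → ℝ) (F : C → ℝ) (s : ι → C) (p : ι) : ℝ :=
  m p * F (s p) / totalPower m s (s p)

/-- A better response step of miner `p` moving to coin `c`. -/
def betterStep {ι C : Type*} [Fintype ι] [DecidableEq ι] [DecidableEq C]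
    (m : ι → ℝ) (F : C → ℝ) (s : ι → C) (p : ι) (c : C) : Prop :=
  payoff m F s p < payoff m F (Function.update s p c) p

/-- Miner `p` is stable in `s`: it has no better response step. -/
def minerStable {ι C : Type*} [Fintype ι] [DecidableEq ι] [DecidableEq C]
    (m : ι → ℝ) (F : C → ℝ) (s : ι → C) (p : ι) : Prop :=
  ∀ c, ¬ betterStep m F s p c

/-- A configuration is stable (a pure equilibrium) if no miner has a better response step. -/
def stableConfig {ι C : Type*} [Fintype ι] [DecidableEq ι] [DecidableEq C]
    (m : ι → ℝ) (F : C → ℝ) (s : ι → C) : Prop :=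
  ∀ p c, ¬ betterStep m F s p c

/-- the game with two miners of powers 2 and 1 and two coins with
reward 1 each admits no exact potential function. -/
theorem no_exact_potential :
    ¬ ∃ H : (Fin 2 → Fin 2) → ℝ,
      ∀ (s : Fin 2 → Fin 2) (p : Fin 2) (c : Fin 2),
        H (Function.update s p c) - H s =
          payoff (![2, 1] : Fin 2 → ℝ) (fun _ => (1 : ℝ)) (Function.update s p c) p -
            payoff (![2, 1] : Fin 2 → ℝ) (fun _ => (1 : ℝ)) s p := by
  rintro ⟨H, h⟩
  have e1 : Function.update (![0,0] : Fin 2 → Fin 2) 1 1 = ![0,1] := by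
    funext i; fin_cases i <;> simp [Function.update]
  have e2 : Function.update (![0,1] : Fin 2 → Fin 2) 0 1 = ![1,1] := by
    funext i; fin_cases i <;> simp [Function.update]
  have e3 : Function.update (![1,1] : Fin 2 → Fin 2) 1 0 = ![1,0] := by
    funext i; fin_cases i <;> simp [Function.update]
  have e4 : Function.update (![1,0] : Fin 2 → Fin 2) 0 0 = ![0,0] := by
    funext i; fin_cases i <;> simp [Function.update]
  have h1 := h ![0,0] 1 1
  have h2 := h ![0,1] 0 1
  have h3 := h ![1,1] 1 0
  have h4 := h ![1,0] 0 0
  rw [e1] at h1; rw [e2] at h2; rw [e3] at h3; rw [e4] at h4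
  simp only [payoff, totalPower, Fin.sum_univ_two, Matrix.cons_val_zero,
    Matrix.cons_val_one, Matrix.head_cons] at h1 h2 h3 h4
  norm_num at h1 h2 h3 h4
  linarith
end

section
/- Every better response learning sequence in a mining game is finite, i.e., there is no infinite sequence of configurations where each is obtained from the previous by a better response step of some miner; hence every maximal sequence of better response steps ends in a pure Nash equilibrium. -/
open Finset Function

section MiningAux

variable {ι C : Type*} [Fintype ι] [DecidableEq ι] [Fintype C] [DecidableEq C]

/-- Load of coin `c`. -/
noncomputable def mgLoad (m : ι → ℝ) (F : C → ℝ) (s : ι → C) (c : C) : ℝ :=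
  totalPower m s c / F c

open Classical in
/-- All possible load values. -/
noncomputable def mgVals (m : ι → ℝ) (F : C → ℝ) : Finset ℝ :=
  Finset.image (fun q : (ι → C) × C => mgLoad m F q.1 q.2) Finset.univ

open Classical in
noncomputable def mgHt (V : Finset ℝ) (t : ℝ) : ℕ :=
  (V.filter (fun v => v ≤ t)).card

noncomputable def mgPot (m : ι → ℝ) (F : C → ℝ) (s : ι → C) : ℕ :=
  ∑ c, 3 ^ mgHt (mgVals m F) (mgLoad m F s c)

lemma mgHt_lt {V : Finset ℝ} {x t : ℝ} (hx : x ∈ V) (h : t < x) :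
    mgHt V t < mgHt V x := by
  classical
  unfold mgHt
  apply Finset.card_lt_card
  constructor
  · intro v hv
    simp only [Finset.mem_filter] at hv ⊢
    exact ⟨hv.1, hv.2.trans h.le⟩
  · intro hsub
    have hxmem : x ∈ V.filter (fun v => v ≤ x) := by
      simp [hx]
    have := hsub hxmem
    simp only [Finset.mem_filter] at this
    exact absurd this.2 (not_le.mpr h)

lemma mgLoad_mem_vals (m : ι → ℝ) (F : C → ℝ) (s : ι → C) (c : C) :
    mgLoad m F s c ∈ mgVals m F := by
  classical
  unfold mgVals
  exact Finset.mem_image.mpr ⟨(s, c), Finset.mem_univ _, rfl⟩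

lemma totalPower_nonneg (m : ι → ℝ) (hm : ∀ p, 0 < m p) (s : ι → C) (c : C) :
    0 ≤ totalPower m s c := by
  unfold totalPower
  apply Finset.sum_nonneg
  intro p _
  split <;> [exact (hm p).le; rfl]

lemma totalPower_pos (m : ι → ℝ) (hm : ∀ p, 0 < m p) (s : ι → C) (p : ι) :
    m p ≤ totalPower m s (s p) := by
  unfold totalPower
  have := Finset.single_le_sum (f := fun q => if s q = s p then m q else 0)
    (fun q _ => by split <;> [exact (hm q).le; rfl]) (Finset.mem_univ p)
  simpa using this

lemma totalPower_update (m : ι → ℝ) (s : ι → C) (p : ι) (c d : C) :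
    totalPower m (Function.update s p c) d
      = totalPower m s d + (if c = d then m p else 0) - (if s p = d then m p else 0) := by
  unfold totalPower
  have hfun : (fun q => if Function.update s p c q = d then m q else 0)
      = Function.update (fun q => if s q = d then m q else 0) p
          (if c = d then m p else 0) := by
    funext q
    by_cases hq : q = p
    · subst hq; simp
    · simp [Function.update_of_ne hq]
  rw [hfun, Finset.sum_update_of_mem (Finset.mem_univ p), ← Finset.erase_eq,
    Finset.sum_erase_eq_sub (Finset.mem_univ p)]
  ring

lemma mgPot_lt_of_betterStep (m : ι → ℝ) (F : C → ℝ)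
    (hm : ∀ p, 0 < m p) (hF : ∀ c, 0 < F c)
    {s : ι → C} {p : ι} {c : C} (h : betterStep m F s p c) :
    mgPot m F (Function.update s p c) < mgPot m F s := by
  classical
  set a := s p with ha
  have hac : a ≠ c := by
    intro hc
    rw [← hc] at h
    unfold betterStep at h
    rw [ha, Function.update_eq_self] at h
    exact lt_irrefl _ h
  set s' := Function.update s p c with hs'
  have hMa : m p ≤ totalPower m s a := totalPower_pos m hm s p
  have hMapos : 0 < totalPower m s a := lt_of_lt_of_le (hm p) hMa
  have hMc : 0 ≤ totalPower m s c := totalPower_nonneg m hm s c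
  have htpa : totalPower m s' a = totalPower m s a - m p := by
    rw [hs', totalPower_update]
    simp [hac, Ne.symm, if_neg (Ne.symm hac)]
    exact fun h' => absurd ha.symm h'
  have htpc : totalPower m s' c = totalPower m s c + m p := by
    rw [hs', totalPower_update]
    simp [if_neg hac]
    exact fun h' => absurd (ha.trans h') hac
  have htpd : ∀ d, d ≠ a → d ≠ c → totalPower m s' d = totalPower m s d := by
    intro d hda hdc
    rw [hs', totalPower_update]
    simp [if_neg (Ne.symm hdc), if_neg (Ne.symm hda)]
    exact fun h' => absurd (ha.trans h').symm hda
  -- unfold the better step inequality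
  have hs'p : s' p = c := Function.update_self p c s
  have hpay : m p * F a / totalPower m s a
      < m p * F c / (totalPower m s c + m p) := by
    have := h
    unfold betterStep payoff at this
    rwa [← hs', hs'p, htpc] at this
  have hMcpos : 0 < totalPower m s c + m p := by linarith [hm p]
  -- key inequalities on loads
  have hload_c : mgLoad m F s' c < mgLoad m F s a := by
    unfold mgLoad
    rw [htpc]
    rw [div_lt_div_iff₀ hMapos hMcpos] at hpay
    rw [div_lt_div_iff₀ (hF c) (hF a)]
    nlinarith [hm p, hF a, hF c]
  have hload_a : mgLoad m F s' a < mgLoad m F s a := by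
    unfold mgLoad
    rw [htpa]
    exact (div_lt_div_iff_of_pos_right (hF a)).mpr (sub_lt_self _ (hm p))
  -- heights
  set V := mgVals m F with hV
  have hmemA : mgLoad m F s a ∈ V := mgLoad_mem_vals m F s a
  set k := mgHt V (mgLoad m F s a) with hk
  have hta : mgHt V (mgLoad m F s' a) < k := mgHt_lt hmemA hload_a
  have htc : mgHt V (mgLoad m F s' c) < k := mgHt_lt hmemA hload_c
  -- sum decomposition
  have hdecomp : ∀ t : ι → C, (∀ d, d ≠ a → d ≠ c → mgLoad m F t d = mgLoad m F s d) →
      mgPot m F t = 3 ^ mgHt V (mgLoad m F t a) + 3 ^ mgHt V (mgLoad m F t c)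
        + ∑ d ∈ (Finset.univ.erase a).erase c, 3 ^ mgHt V (mgLoad m F s d) := by
    intro t hsame
    unfold mgPot
    rw [← Finset.add_sum_erase _ _ (Finset.mem_univ a),
      ← Finset.add_sum_erase _ _ (Finset.mem_erase.mpr ⟨Ne.symm hac, Finset.mem_univ c⟩),
      ← add_assoc]
    congr 1
    apply Finset.sum_congr rfl
    intro d hd
    simp only [Finset.mem_erase] at hd
    rw [hsame d hd.2.1 hd.1]
  have hP1 : mgPot m F s' = 3 ^ mgHt V (mgLoad m F s' a) + 3 ^ mgHt V (mgLoad m F s' c)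
        + ∑ d ∈ (Finset.univ.erase a).erase c, 3 ^ mgHt V (mgLoad m F s d) := by
    apply hdecomp
    intro d hda hdc
    unfold mgLoad
    rw [htpd d hda hdc]
  have hP2 : mgPot m F s = 3 ^ k + 3 ^ mgHt V (mgLoad m F s c)
        + ∑ d ∈ (Finset.univ.erase a).erase c, 3 ^ mgHt V (mgLoad m F s d) := by
    exact hdecomp s (fun _ _ _ => rfl)
  rw [hP1, hP2]
  have h1 : 3 ^ mgHt V (mgLoad m F s' a) ≤ 3 ^ (k - 1) :=
    Nat.pow_le_pow_right (by norm_num) (by omega)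
  have h2 : 3 ^ mgHt V (mgLoad m F s' c) ≤ 3 ^ (k - 1) :=
    Nat.pow_le_pow_right (by norm_num) (by omega)
  have hpos : 0 < 3 ^ (k - 1) := Nat.pow_pos (by norm_num)
  have h3 : 3 ^ k = 3 * 3 ^ (k - 1) := by
    calc 3 ^ k = 3 ^ (k - 1 + 1) := by congr 1; omega
    _ = 3 * 3 ^ (k - 1) := by rw [pow_succ]; ring
  have hsum : 3 ^ mgHt V (mgLoad m F s' a) + 3 ^ mgHt V (mgLoad m F s' c) < 3 ^ k := by
    calc 3 ^ mgHt V (mgLoad m F s' a) + 3 ^ mgHt V (mgLoad m F s' c)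
        ≤ 3 ^ (k - 1) + 3 ^ (k - 1) := Nat.add_le_add h1 h2
    _ < 3 * 3 ^ (k - 1) := by linarith
    _ = 3 ^ k := h3.symm
  exact Nat.add_lt_add_right
    (lt_of_lt_of_le hsum (Nat.le_add_right _ _)) _

end MiningAux

/-- every better response learning sequence is finite (no infinite chain
of better response steps), and every configuration has a better-response path to a
pure Nash equilibrium. -/
theorem better_response_converges {ι C : Type*} [Fintype ι] [DecidableEq ι]
    [Fintype C] [DecidableEq C]
    (m : ι → ℝ) (F : C → ℝ) (hm : ∀ p, 0 < m p) (hF : ∀ c, 0 < F c) :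
    (∀ f : ℕ → ι → C,
        ¬ ∀ k, ∃ p c, betterStep m F (f k) p c ∧ f (k + 1) = Function.update (f k) p c) ∧
    (∀ s : ι → C, ∃ s' : ι → C,
        Relation.ReflTransGen
          (fun t t' => ∃ p c, betterStep m F t p c ∧ t' = Function.update t p c) s s' ∧
        stableConfig m F s') := by
  classical
  constructor
  · intro f hf
    have hanti : StrictAnti fun k => mgPot m F (f k) := by
      apply strictAnti_nat_of_succ_lt
      intro k
      obtain ⟨p, c, hbs, hupd⟩ := hf k
      rw [hupd]
      exact mgPot_lt_of_betterStep m F hm hF hbs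
    obtain ⟨i, j, hij, hfij⟩ := Finite.exists_ne_map_eq_of_infinite f
    exact hij (hanti.injective (congrArg (mgPot m F) hfij))
  · have key : ∀ n (s : ι → C), mgPot m F s < n →
        ∃ s' : ι → C,
          Relation.ReflTransGen
            (fun t t' => ∃ p c, betterStep m F t p c ∧ t' = Function.update t p c) s s' ∧
          stableConfig m F s' := by
      intro n
      induction n with
      | zero => intro s hs; omega
      | succ n ih =>
        intro s hs
        by_cases hstab : stableConfig m F s
        · exact ⟨s, Relation.ReflTransGen.refl, hstab⟩
        · simp only [stableConfig, not_forall, not_not] at hstab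
          obtain ⟨p, c, hbs⟩ := hstab
          have hlt : mgPot m F (Function.update s p c) < n := by
            have := mgPot_lt_of_betterStep m F hm hF hbs
            omega
          obtain ⟨s', hpath, hstab'⟩ := ih (Function.update s p c) hlt
          exact ⟨s', Relation.ReflTransGen.head ⟨p, c, hbs, rfl⟩ hpath, hstab'⟩
    intro s
    exact key (mgPot m F s + 1) s (by omega)
end

section
/- In a generic mining game satisfying the never-alone assumption, if there exist at least two distinct stable configurations, then for every stable configuration s there exist a miner p and a stable configuration s' with u_p(s') > u_p(s). -/
open Finset Function

lemma totalPower_eq_sum_filter {ι C : Type*} [Fintype ι] [DecidableEq C]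
    (m : ι → ℝ) (s : ι → C) (c : C) :
    totalPower m s c = ∑ p ∈ Finset.univ.filter fun p => s p = c, m p := by
  rw [totalPower, Finset.sum_filter]

lemma stable_fiber_nonempty {ι C : Type*} [Fintype ι] [DecidableEq ι] [DecidableEq C]
    (m : ι → ℝ) (F : C → ℝ)
    (hAlone : ∀ (s : ι → C) (c : C),
      (Finset.univ.filter fun p => s p = c).card ≤ 1 → ∃ p, betterStep m F s p c)
    (s : ι → C) (hs : stableConfig m F s) (c : C) :
    (Finset.univ.filter fun p => s p = c).Nonempty := by
  rw [← Finset.card_pos]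
  by_contra h
  push_neg at h
  obtain ⟨p, hp⟩ := hAlone s c (by omega)
  exact hs p c hp

lemma sum_payoff_stable {ι C : Type*} [Fintype ι] [DecidableEq ι] [Fintype C] [DecidableEq C]
    (m : ι → ℝ) (F : C → ℝ) (hm : ∀ p, 0 < m p)
    (hAlone : ∀ (s : ι → C) (c : C),
      (Finset.univ.filter fun p => s p = c).card ≤ 1 → ∃ p, betterStep m F s p c)
    (s : ι → C) (hs : stableConfig m F s) :
    ∑ p, payoff m F s p = ∑ c, F c := by
  rw [← Finset.sum_fiberwise Finset.univ s (fun p => payoff m F s p)]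
  refine Finset.sum_congr rfl fun c _ => ?_
  have hne := stable_fiber_nonempty m F hAlone s hs c
  have hT : 0 < totalPower m s c := by
    rw [totalPower_eq_sum_filter]
    exact Finset.sum_pos (fun p _ => hm p) hne
  have : ∑ p ∈ Finset.univ.filter fun p => s p = c, payoff m F s p
      = ∑ p ∈ Finset.univ.filter fun p => s p = c, m p * (F c / totalPower m s c) := by
    refine Finset.sum_congr rfl fun p hp => ?_
    have hpc : s p = c := (Finset.mem_filter.mp hp).2
    rw [payoff, hpc]; ring
  rw [this, ← Finset.sum_mul, ← totalPower_eq_sum_filter]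
  field_simp

/-- in a generic game satisfying the never-alone assumption, if there are
two distinct stable configurations, then every stable configuration is strictly worse
for some miner than some (other) stable configuration. -/
theorem exists_better_equilibrium {ι C : Type*} [Fintype ι] [DecidableEq ι]
    [Fintype C] [DecidableEq C]
    (m : ι → ℝ) (F : C → ℝ) (hm : ∀ p, 0 < m p) (hF : ∀ c, 0 < F c)
    (hGeneric : ∀ c c' : C, c ≠ c' → ∀ A B : Finset ι, A.Nonempty → B.Nonempty →
      F c / ∑ p ∈ A, m p ≠ F c' / ∑ p ∈ B, m p)
    (hAlone : ∀ (s : ι → C) (c : C),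
      (Finset.univ.filter fun p => s p = c).card ≤ 1 → ∃ p, betterStep m F s p c)
    (hTwo : ∃ s₁ s₂ : ι → C, stableConfig m F s₁ ∧ stableConfig m F s₂ ∧ s₁ ≠ s₂)
    (s : ι → C) (hs : stableConfig m F s) :
    ∃ (p : ι) (s' : ι → C), stableConfig m F s' ∧ payoff m F s p < payoff m F s' p := by
  obtain ⟨s₁, s₂, h₁, h₂, hne⟩ := hTwo
  obtain ⟨s', hs', hss'⟩ : ∃ s', stableConfig m F s' ∧ s' ≠ s := by
    by_cases h : s₁ = s
    · exact ⟨s₂, h₂, fun e => hne (h.trans e.symm)⟩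
    · exact ⟨s₁, h₁, h⟩
  by_contra hcon
  push_neg at hcon
  have hle : ∀ p, payoff m F s' p ≤ payoff m F s p := fun p => hcon p s' hs'
  have hsum : ∑ p, payoff m F s' p = ∑ p, payoff m F s p := by
    rw [sum_payoff_stable m F hm hAlone s hs, sum_payoff_stable m F hm hAlone s' hs']
  have heq : ∀ p, payoff m F s' p = payoff m F s p := by
    intro p
    exact (Finset.sum_eq_sum_iff_of_le (fun i _ => hle i)).mp hsum p (Finset.mem_univ p)
  apply hss'
  funext p
  by_contra hpc
  have hA : (Finset.univ.filter fun q => s' q = s' p).Nonempty :=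
    ⟨p, Finset.mem_filter.mpr ⟨Finset.mem_univ p, rfl⟩⟩
  have hB : (Finset.univ.filter fun q => s q = s p).Nonempty :=
    ⟨p, Finset.mem_filter.mpr ⟨Finset.mem_univ p, rfl⟩⟩
  have hmp := (hm p).ne'
  have : F (s' p) / totalPower m s' (s' p) = F (s p) / totalPower m s (s p) := by
    have h := heq p
    rw [payoff, payoff, mul_div_assoc, mul_div_assoc] at h
    exact mul_left_cancel₀ hmp h
  rw [totalPower_eq_sum_filter, totalPower_eq_sum_filter] at this
  exact hGeneric (s' p) (s p) hpc _ _ hA hB this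
end

section
/- If two miners p and p' both mine coin c in configuration s with m_p ≤ m_{p'}, and p is stable in s (has no better response step), then p' is also stable in s. -/
open Finset Function

/-- if miners `p` and `p'` both mine coin `c` in `s`, `m p ≤ m p'`, and
`p` is stable in `s`, then `p'` is stable in `s`. -/
theorem bigger_sharing_miner_stable {ι C : Type*} [Fintype ι] [DecidableEq ι]
    [Fintype C] [DecidableEq C]
    (m : ι → ℝ) (F : C → ℝ) (hm : ∀ q, 0 < m q) (hF : ∀ d, 0 < F d)
    (s : ι → C) (p p' : ι) (c : C)
    (hp : s p = c) (hp' : s p' = c) (hle : m p ≤ m p')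
    (hstab : minerStable m F s p) :
    minerStable m F s p' := by
  -- basic facts about totalPower
  have tp_nonneg : ∀ d, 0 ≤ totalPower m s d := by
    intro d
    refine Finset.sum_nonneg ?_
    intro q _
    split <;> [exact (hm q).le; rfl]
  have tp_ge : ∀ q : ι, m q ≤ totalPower m s (s q) := by
    intro q
    have := Finset.single_le_sum (f := fun r => if s r = s q then m r else 0)
      (fun r _ => by split <;> [exact (hm r).le; rfl]) (Finset.mem_univ q)
    simpa [totalPower] using this
  have tp_update : ∀ (q : ι) (c' : C), s q ≠ c' →
      totalPower m (Function.update s q c') c' = totalPower m s c' + m q := by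
    intro q c' hne
    unfold totalPower
    rw [← Finset.sum_erase_add _ _ (Finset.mem_univ q),
        ← Finset.sum_erase_add _ _ (Finset.mem_univ q)]
    have hsum : ∑ r ∈ Finset.univ.erase q,
        (if Function.update s q c' r = c' then m r else 0)
        = ∑ r ∈ Finset.univ.erase q, (if s r = c' then m r else 0) := by
      refine Finset.sum_congr rfl ?_
      intro r hr
      rw [Function.update_of_ne (Finset.ne_of_mem_erase hr)]
    rw [hsum, Function.update_self, if_pos rfl, if_neg hne]
    ring
  have Mc_pos : 0 < totalPower m s c := lt_of_lt_of_le (hm p) (hp ▸ tp_ge p)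
  intro c' hbad
  by_cases hc : c' = c
  · -- moving to the same coin: no change
    have : Function.update s p' c' = s := by
      rw [hc, ← hp']; exact Function.update_eq_self p' s
    rw [betterStep, this] at hbad
    exact lt_irrefl _ hbad
  · -- c' ≠ c
    have hne : s p ≠ c' := fun h => hc (h.symm.trans hp)
    have hne' : s p' ≠ c' := fun h => hc (h.symm.trans hp')
    have hpstab := hstab c'
    rw [betterStep, not_lt] at hpstab
    rw [betterStep] at hbad
    -- rewrite payoffs
    have key : ∀ q : ι, s q = c → s q ≠ c' →
        payoff m F (Function.update s q c') q
          = m q * F c' / (totalPower m s c' + m q) := by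
      intro q hq hqne
      unfold payoff
      rw [Function.update_self, tp_update q c' hqne]
    have keyp := key p hp hne
    have keyp' := key p' hp' hne'
    have hpayq : ∀ q : ι, s q = c →
        payoff m F s q = m q * F c / totalPower m s c := by
      intro q hq; unfold payoff; rw [hq]
    rw [keyp, hpayq p hp] at hpstab
    rw [keyp', hpayq p' hp'] at hbad
    -- derive contradiction
    have hden : 0 < totalPower m s c' + m p :=
      add_pos_of_nonneg_of_pos (tp_nonneg c') (hm p)
    have hden' : 0 < totalPower m s c' + m p' :=
      add_pos_of_nonneg_of_pos (tp_nonneg c') (hm p')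
    -- from hpstab: F c / Mc ≥ F c' / (Mc' + m p)
    have h1 : F c' / (totalPower m s c' + m p) ≤ F c / totalPower m s c := by
      have := hpstab
      rw [div_le_div_iff₀ hden Mc_pos] at this ⊢
      have hmp := hm p
      nlinarith [this]
    have h2 : F c' / (totalPower m s c' + m p') ≤ F c' / (totalPower m s c' + m p) :=
      div_le_div_of_nonneg_left (hF c').le hden (by linarith)
    have h3 : m p' * F c' / (totalPower m s c' + m p')
        ≤ m p' * F c / totalPower m s c := by
      rw [mul_div_assoc, mul_div_assoc]
      exact mul_le_mul_of_nonneg_left (le_trans h2 h1) (hm p').le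
    exact absurd hbad (not_lt.mpr h3)
end

section
/- Let s be a configuration of system (Π, C) and add a new miner p_new with m_{p_new} ≤ min of all existing miners' powers. Let c = argmax over coins c' of F(c')·m_{p_new}/(M_{c'}(s) + m_{p_new}), and let s' extend s by placing p_new on c. Then p_new is stable in s', and every miner p ∈ Π that was stable in s is stable in s'. -/
open Finset Function

lemma tp_nonneg {ι C : Type*} [Fintype ι] [DecidableEq C]
    (m : ι → ℝ) (hm : ∀ q, 0 ≤ m q) (s : ι → C) (d : C) :
    0 ≤ totalPower m s d :=
  Finset.sum_nonneg fun q _ => by split <;> simp [hm q]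

lemma self_le_tp {ι C : Type*} [Fintype ι] [DecidableEq C]
    (m : ι → ℝ) (hm : ∀ q, 0 ≤ m q) (s : ι → C) (p : ι) :
    m p ≤ totalPower m s (s p) := by
  have := Finset.single_le_sum (f := fun q => if s q = s p then m q else 0)
    (fun q _ => by by_cases h : s q = s p <;> simp [h, hm q]) (Finset.mem_univ p)
  simpa [totalPower] using this

lemma tp_update {ι C : Type*} [Fintype ι] [DecidableEq ι] [DecidableEq C]
    (m : ι → ℝ) (s : ι → C) (p : ι) (d e : C) :
    totalPower m (Function.update s p d) e =
      totalPower m s e + ((if d = e then m p else 0) - (if s p = e then m p else 0)) := by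
  unfold totalPower
  have h : ∑ q, ((if Function.update s p d q = e then m q else 0)
        - (if s q = e then m q else 0))
      = (if d = e then m p else 0) - (if s p = e then m p else 0) := by
    rw [Finset.sum_eq_single p]
    · simp
    · intro q _ hq; simp [Function.update_of_ne hq]
    · simp
  rw [Finset.sum_sub_distrib] at h
  linarith

/-- adding a new miner, of power at most that of every existing miner, on a
coin maximizing its marginal payoff keeps the new miner and all previously stable miners
stable. The extended set of miners is modeled as `Option ι`, with `none` the new miner. -/
theorem add_smallest_miner {ι C : Type*} [Fintype ι] [DecidableEq ι]
    [Fintype C] [DecidableEq C]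
    (m : ι → ℝ) (F : C → ℝ) (hm : ∀ q, 0 < m q) (hF : ∀ d, 0 < F d)
    (s : ι → C) (mnew : ℝ) (hmnew : 0 < mnew) (hmin : ∀ p, mnew ≤ m p)
    (c : C)
    (hc : ∀ c' : C, F c' * mnew / (totalPower m s c' + mnew) ≤
      F c * mnew / (totalPower m s c + mnew))
    (m' : Option ι → ℝ) (s' : Option ι → C)
    (hm' : ∀ p, m' (some p) = m p) (hm'new : m' none = mnew)
    (hs' : ∀ p, s' (some p) = s p) (hs'new : s' none = c) :
    minerStable m' F s' none ∧
      ∀ p : ι, minerStable m F s p → minerStable m' F s' (some p) := by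
  have hmnn : ∀ q, 0 ≤ m q := fun q => (hm q).le
  have hMnn : ∀ d, 0 ≤ totalPower m s d := tp_nonneg m hmnn s
  have tp' : ∀ e, totalPower m' s' e = totalPower m s e + (if c = e then mnew else 0) := by
    intro e
    unfold totalPower
    rw [Fintype.sum_option]
    simp only [hs', hm', hs'new, hm'new]
    ring
  -- positivity of denominators of the form M d + mnew
  have hden : ∀ d, 0 < totalPower m s d + mnew := fun d => by
    have := hMnn d; linarith
  constructor
  · -- stability of the new miner
    intro d
    unfold betterStep payoff
    rw [not_lt]
    rw [Function.update_self]
    have h1 : totalPower m' s' (s' none) = totalPower m s c + mnew := by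
      rw [hs'new, tp', if_pos rfl]
    have h2 : totalPower m' (Function.update s' none d) d
        = totalPower m s d + mnew := by
      rw [tp_update, tp', hs'new, hm'new, if_pos rfl]
      by_cases h : c = d <;> simp [h]
    rw [h1, h2, hs'new, hm'new]
    have := hc d
    calc mnew * F d / (totalPower m s d + mnew)
        = F d * mnew / (totalPower m s d + mnew) := by ring_nf
      _ ≤ F c * mnew / (totalPower m s c + mnew) := hc d
      _ = mnew * F c / (totalPower m s c + mnew) := by ring_nf
  · -- stability of old miners
    intro p hstab d
    unfold betterStep payoff
    rw [not_lt]
    rw [Function.update_self, hs', hm']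
    have hMp : 0 < totalPower m s (s p) := lt_of_lt_of_le (hm p) (self_le_tp m hmnn s p)
    have hdenp : ∀ e, 0 < totalPower m s e + m p := fun e => by
      have := hMnn e; have := hm p; linarith
    by_cases hd : d = s p
    · -- moving to the same coin: nothing changes
      have h2 : totalPower m' (Function.update s' (some p) d) d
          = totalPower m' s' d := by
        rw [tp_update, hs', hm', if_pos rfl,
          if_pos (show s p = d from hd.symm)]
        ring
      rw [h2, hd]
    · have h2 : totalPower m' (Function.update s' (some p) d) d
          = totalPower m s d + (if c = d then mnew else 0) + m p := by
        rw [tp_update, tp', hs', hm', if_pos rfl,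
          if_neg (show ¬ s p = d from fun h => hd h.symm)]
        ring
      rw [h2, tp']
      -- stability in s gives the key inequality for targets d
      have hstab' : m p * F d / (totalPower m s d + m p)
          ≤ m p * F (s p) / totalPower m s (s p) := by
        have := hstab d
        unfold betterStep payoff at this
        rw [not_lt] at this
        rw [Function.update_self, tp_update, if_pos rfl,
          if_neg (show ¬ s p = d from fun h => hd h.symm)] at this
        simpa using this
      by_cases hsp : c = s p
      · -- p sits on c; use the argmax property and mnew ≤ m p
        have hd' : ¬ (c = d) := fun h => hd (h.symm.trans hsp)
        rw [if_pos hsp, if_neg hd', add_zero, ← hsp]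
        have key : F d / (totalPower m s d + mnew) ≤ F c / (totalPower m s c + mnew) := by
          have h := hc d
          rw [div_le_div_iff₀ (hden d) (hden c)] at h
          rw [div_le_div_iff₀ (hden d) (hden c)]
          nlinarith [hmnew]
        have key2 : F d / (totalPower m s d + m p) ≤ F d / (totalPower m s d + mnew) := by
          apply div_le_div_of_nonneg_left (hF d).le (hden d)
          linarith [hmin p, hMnn d]
        have := (key2.trans key)
        have hmp := (hm p).le
        calc m p * F d / (totalPower m s d + m p)
            = m p * (F d / (totalPower m s d + m p)) := by ring
          _ ≤ m p * (F c / (totalPower m s c + mnew)) := by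
              apply mul_le_mul_of_nonneg_left this hmp
          _ = m p * F c / (totalPower m s c + mnew) := by ring
      · -- p's coin is not c
        rw [if_neg hsp, add_zero]
        by_cases hcd : c = d
        · -- target coin is c: denominator grew, payoff only smaller
          rw [if_pos hcd]
          refine le_trans ?_ hstab'
          apply div_le_div_of_nonneg_left (mul_nonneg (hm p).le (hF d).le) (hdenp d)
          linarith [hmnew.le]
        · rw [if_neg hcd]
          simpa using hstab'
end

section
/- Every mining game G_{Π,C,F} with finite nonempty Π and C has at least one stable configuration (pure Nash equilibrium). -/
open Finset Function

section MinerAux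

lemma my_div_le_div_left {a x y : ℝ} (ha : 0 ≤ a) (hy : 0 < y) (h : y ≤ x) :
    a / x ≤ a / y := by
  have h1 := one_div_le_one_div_of_le hy h
  calc a / x = a * (1 / x) := by ring
    _ ≤ a * (1 / y) := mul_le_mul_of_nonneg_left h1 ha
    _ = a / y := by ring

variable {ι C : Type*} [Fintype ι] [DecidableEq ι] [Fintype C] [DecidableEq C]

/-- Total power on coin `c` contributed by miners in `A`. -/
noncomputable def minerT (m : ι → ℝ) (A : Finset ι) (s : ι → C) (c : C) : ℝ :=
  ∑ p ∈ A, if s p = c then m p else 0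

lemma minerT_nonneg (m : ι → ℝ) (hm : ∀ p, 0 < m p) (A : Finset ι) (s : ι → C) (c : C) :
    0 ≤ minerT m A s c :=
  Finset.sum_nonneg fun p _ => by by_cases h : s p = c <;> simp [h, (hm p).le]

lemma minerT_congr (m : ι → ℝ) {A : Finset ι} {s s' : ι → C} (h : ∀ q ∈ A, s q = s' q) (c : C) :
    minerT m A s c = minerT m A s' c :=
  Finset.sum_congr rfl fun q hq => by rw [h q hq]

lemma minerT_erase (m : ι → ℝ) {A : Finset ι} {p : ι} (hp : p ∈ A) (s : ι → C) (c : C) :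
    minerT m A s c = (if s p = c then m p else 0) + minerT m (A.erase p) s c := by
  rw [minerT, minerT, ← Finset.add_sum_erase A _ hp]

lemma minerT_erase_of_ne (m : ι → ℝ) {A : Finset ι} {q : ι} {s : ι → C} {c : C}
    (hq : q ∈ A) (h : s q ≠ c) : minerT m (A.erase q) s c = minerT m A s c := by
  rw [minerT_erase m hq s c, if_neg h, zero_add]

/-- Relative stability: no miner of `A` can improve in the game restricted to `A`. -/
def stableOn (m : ι → ℝ) (F : C → ℝ) (A : Finset ι) (s : ι → C) : Prop :=
  ∀ p ∈ A, ∀ c, F c / (minerT m (A.erase p) s c + m p)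
    ≤ F (s p) / (minerT m (A.erase p) s (s p) + m p)

lemma exists_stableOn [Nonempty C] (m : ι → ℝ) (F : C → ℝ)
    (hm : ∀ p, 0 < m p) (hF : ∀ c, 0 < F c) (A : Finset ι) :
    ∃ s : ι → C, stableOn m F A s := by
  induction A using Finset.strongInduction with
  | _ A ih =>
    rcases A.eq_empty_or_nonempty with rfl | hA
    · exact ⟨fun _ => Classical.arbitrary C, fun p hp => absurd hp (Finset.notMem_empty p)⟩
    obtain ⟨p, hpA, hpmin⟩ := A.exists_min_image m hA
    obtain ⟨s, hs⟩ := ih (A.erase p) (Finset.erase_ssubset hpA)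
    set B := A.erase p with hB
    obtain ⟨c₀, -, hc₀⟩ := Finset.exists_max_image (univ : Finset C)
      (fun c => F c / (minerT m B s c + m p)) univ_nonempty
    simp only [mem_univ, true_implies] at hc₀
    set s' := Function.update s p c₀ with hs'
    have hsp : s' p = c₀ := Function.update_self _ _ _
    have hupd : ∀ q ∈ B, s q = s' q := fun q hq =>
      (Function.update_of_ne (Finset.ne_of_mem_erase hq) _ _).symm
    have hTB : ∀ c, minerT m B s' c = minerT m B s c :=
      fun c => (minerT_congr m hupd c).symm
    have hpos : ∀ (X : Finset ι) (t : ι → C) (c : C) (r : ℝ), 0 < r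
        → 0 < minerT m X t c + r :=
      fun X t c r hr => add_pos_of_nonneg_of_pos (minerT_nonneg m hm X t c) hr
    refine ⟨s', ?_⟩
    intro q hqA c
    by_cases hq : q = p
    · subst hq
      rw [hsp, ← hB, hTB, hTB]
      exact hc₀ c
    · have hqB : q ∈ B := Finset.mem_erase.2 ⟨hq, hqA⟩
      have hmq : m p ≤ m q := hpmin q hqA
      have hsq : s' q = s q := Function.update_of_ne hq _ _
      have hAq : ∀ c, minerT m (A.erase q) s' c
          = (if c₀ = c then m p else 0) + minerT m (B.erase q) s c := by
        intro c
        have hpin : p ∈ A.erase q := Finset.mem_erase.2 ⟨Ne.symm hq, hpA⟩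
        rw [minerT_erase m hpin s' c, hsp]
        have h2 : (A.erase q).erase p = B.erase q := by
          rw [hB]; exact Finset.erase_right_comm
        rw [h2]
        congr 1
        exact minerT_congr m (fun r hr => Function.update_of_ne
          (Finset.ne_of_mem_erase (Finset.mem_of_mem_erase hr)) _ _) c
      have hIH := hs q hqB c
      rw [hsq] at *
      rw [hAq c, hAq (s q)]
      by_cases hca : c₀ = s q
      · rw [if_pos hca]
        have hTBa : minerT m B s (s q) = m q + minerT m (B.erase q) s (s q) := by
          rw [minerT_erase m hqB s (s q), if_pos rfl]
        by_cases hcc : c₀ = c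
        · have hceq : c = s q := hcc ▸ hca
          rw [if_pos hcc, hceq]
        · rw [if_neg hcc, zero_add]
          have hc_ne : s q ≠ c := fun h => hcc (hca.trans h)
          have h1 : minerT m (B.erase q) s c = minerT m B s c :=
            minerT_erase_of_ne m hqB hc_ne
          have hif : 0 ≤ m p := (hm p).le
          calc F c / (minerT m (B.erase q) s c + m q)
              ≤ F c / (minerT m B s c + m p) := by
                rw [h1]
                exact my_div_le_div_left (hF c).le (hpos B s c (m p) (hm p))
                  (add_le_add_right hmq _)
            _ ≤ F c₀ / (minerT m B s c₀ + m p) := hc₀ c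
            _ = F (s q) / (m p + minerT m (B.erase q) s (s q) + m q) := by
                rw [hca, hTBa]; congr 1; ring
      · rw [if_neg hca, zero_add]
        have hle : minerT m (B.erase q) s c + m q
            ≤ (if c₀ = c then m p else 0) + minerT m (B.erase q) s c + m q := by
          have : (0:ℝ) ≤ if c₀ = c then m p else 0 := by
            by_cases h : c₀ = c <;> simp [h, (hm p).le]
          linarith
        calc F c / ((if c₀ = c then m p else 0) + minerT m (B.erase q) s c + m q)
            ≤ F c / (minerT m (B.erase q) s c + m q) :=
              my_div_le_div_left (hF c).le (hpos (B.erase q) s c (m q) (hm q)) hle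
          _ ≤ F (s q) / (minerT m (B.erase q) s (s q) + m q) := hIH

end MinerAux

/-- every mining game (finite nonempty sets of miners and coins, positive
powers and rewards) has a stable configuration (pure Nash equilibrium). -/
theorem exists_stable_configuration {ι C : Type*} [Fintype ι] [DecidableEq ι] [Nonempty ι]
    [Fintype C] [DecidableEq C] [Nonempty C]
    (m : ι → ℝ) (F : C → ℝ) (hm : ∀ p, 0 < m p) (hF : ∀ c, 0 < F c) :
    ∃ s : ι → C, stableConfig m F s := by
  obtain ⟨s, hs⟩ := exists_stableOn m F hm hF (univ : Finset ι)
  refine ⟨s, fun p c => ?_⟩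
  rw [betterStep, not_lt]
  have hTP : ∀ (t : ι → C) (c : C), totalPower m t c = minerT m univ t c := fun _ _ => rfl
  have h1 : totalPower m s (s p) = m p + minerT m (univ.erase p) s (s p) := by
    rw [hTP, minerT_erase m (mem_univ p) s (s p), if_pos rfl]
  have h2 : totalPower m (Function.update s p c) c
      = m p + minerT m (univ.erase p) s c := by
    rw [hTP, minerT_erase m (mem_univ p) _ c, Function.update_self, if_pos rfl]
    congr 1
    exact minerT_congr m
      (fun r hr => Function.update_of_ne (Finset.ne_of_mem_erase hr) _ _) c
  have hkey := hs p (mem_univ p) c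
  rw [payoff, payoff, Function.update_self, h1, h2, mul_div_assoc, mul_div_assoc]
  apply mul_le_mul_of_nonneg_left _ (hm p).le
  rw [add_comm (m p) (minerT m (univ.erase p) s c),
    add_comm (m p) (minerT m (univ.erase p) s (s p))]
  exact hkey
end

section
/- In stage i > 1 with designed rewards H_i(s), every better response learning starting from s ∈ T_i \ {s_i} converges to a configuration s' ∈ T_i such that s'.p_k = s.p_k for all k < m_i(s) and s'.p_{m_i(s)} = s_f.p_i. -/
open Finset Function

/-- `R(s) = max_c RPU_c(s)`. -/
noncomputable def maxRPU {ι C : Type*} [Fintype ι] [Fintype C] [DecidableEq C] [Nonempty C]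
    (m : ι → ℝ) (F : C → ℝ) (s : ι → C) : ℝ :=
  Finset.univ.sup' Finset.univ_nonempty (RPU m F s)

/-- The designed reward function of stage `i` at configuration `s`: the target coin
`ctar = s_f.p_i` gets reward `R(s)·(M_{ctar}(s) + w)` where `w` is the anchor's power,
every other coin `c` gets `R(s)·M_c(s)`. -/
noncomputable def designedReward {ι C : Type*} [Fintype ι] [Fintype C] [DecidableEq C]
    [Nonempty C] (m : ι → ℝ) (F : C → ℝ) (s : ι → C) (ctar : C) (w : ℝ) : C → ℝ :=
  fun c => if c = ctar then maxRPU m F s * (totalPower m s ctar + w)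
           else maxRPU m F s * totalPower m s c

set_option linter.unusedSectionVars false

namespace Stage16

variable {C : Type*} [Fintype C] [DecidableEq C] {n : ℕ}

lemma totalPower_nonneg (m : Fin n → ℝ) (hm : ∀ p, 0 < m p) (t : Fin n → C) (c : C) :
    0 ≤ totalPower m t c := by
  apply Finset.sum_nonneg
  intro p _
  split <;> [exact (hm p).le; rfl]

lemma le_totalPower (m : Fin n → ℝ) (hm : ∀ p, 0 < m p) (t : Fin n → C) {p : Fin n} {c : C}
    (h : t p = c) : m p ≤ totalPower m t c := by
  have := Finset.single_le_sum (f := fun q => if t q = c then m q else 0)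
    (fun q _ => by split <;> [exact (hm q).le; rfl]) (Finset.mem_univ p)
  simpa [h, totalPower] using this

lemma pair_le_totalPower (m : Fin n → ℝ) (hm : ∀ p, 0 < m p) (t : Fin n → C) {p q : Fin n}
    {c : C} (hpq : p ≠ q) (hp : t p = c) (hq : t q = c) : m p + m q ≤ totalPower m t c := by
  have hsub : ({p, q} : Finset (Fin n)) ⊆ Finset.univ := Finset.subset_univ _
  have := Finset.sum_le_sum_of_subset_of_nonneg hsub
    (f := fun r => if t r = c then m r else 0)
    (fun r _ _ => by split <;> [exact (hm r).le; rfl])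
  calc m p + m q = ∑ r ∈ ({p, q} : Finset (Fin n)), (if t r = c then m r else 0) := by
        rw [Finset.sum_pair hpq, hp, hq, if_pos rfl, if_pos rfl]
    _ ≤ totalPower m t c := this

lemma totalPower_update (m : Fin n → ℝ) (t : Fin n → C) (p : Fin n) (c d : C) :
    totalPower m (Function.update t p c) d
      = totalPower m t d + (if c = d then m p else 0) - (if t p = d then m p else 0) := by
  unfold totalPower
  rw [← Finset.sum_erase_add _ _ (Finset.mem_univ p),
      ← Finset.sum_erase_add (s := Finset.univ) (f := fun q => if t q = d then m q else 0)
        (Finset.mem_univ p)]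
  rw [Finset.sum_congr rfl (fun q hq => by
    rw [Function.update_of_ne (Finset.ne_of_mem_erase hq)]), Function.update_self]
  ring

lemma better_iff (m : Fin n → ℝ) (H : C → ℝ) (t : Fin n → C) (p : Fin n) (c : C)
    (hm : ∀ q, 0 < m q) (h : t p ≠ c) :
    betterStep m H t p c ↔ H (t p) * (totalPower m t c + m p) < H c * totalPower m t (t p) := by
  have hu : 0 < totalPower m t (t p) := lt_of_lt_of_le (hm p) (le_totalPower m hm t rfl)
  have hv : 0 < totalPower m t c + m p := by
    have := totalPower_nonneg m hm t c; linarith [hm p]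
  unfold betterStep payoff
  rw [Function.update_self, totalPower_update]
  rw [if_pos rfl, if_neg h]
  rw [mul_div_assoc, mul_div_assoc, mul_lt_mul_iff_right₀ (hm p)]
  rw [div_lt_div_iff₀ hu (by linarith)]
  constructor <;> intro h' <;> linarith

/-- All the data and hypotheses of stage `i` bundled together. -/
structure Setup (C : Type*) [Fintype C] [DecidableEq C] (n : ℕ) where
  m : Fin n → ℝ
  H : C → ℝ
  s : Fin n → C
  j : Fin n
  a : Fin n
  cp : C
  ct : C
  R : ℝ
  k0 : Fin n
  hm : ∀ p, 0 < m p
  hdec : ∀ k l : Fin n, k < l → m l < m k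
  haj : (a : ℕ) + 1 = (j : ℕ)
  hne : cp ≠ ct
  hsj : s j = cp
  hsg : ∀ l, j < l → s l = ct
  hk0 : k0 < j
  hk0c : s k0 = cp
  hR : 0 < R
  hH1 : ∀ c, c ≠ ct → H c = R * totalPower m s c
  hH2 : H ct = R * (totalPower m s ct + m a)

namespace Setup

variable (X : Setup C n)

/-- The invariant along the better-response path (after the first forced step). -/
def Inv (t : Fin n → C) : Prop :=
  (∀ k, k < X.j → t k = X.s k) ∧ (∀ k, X.j ≤ k → t k = X.cp ∨ t k = X.ct) ∧
    t X.j = X.ct ∧ totalPower X.m t X.cp ≤ totalPower X.m X.s X.cp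

/-- The potential used in the termination argument. -/
noncomputable def psi (t : Fin n → C) : ℝ :=
  X.H X.cp * totalPower X.m t X.ct - X.H X.ct * totalPower X.m t X.cp

lemma a_lt_j : X.a < X.j := by
  have := X.haj; exact Fin.lt_def.mpr (by omega)

lemma mj_lt_ma : X.m X.j < X.m X.a := X.hdec _ _ X.a_lt_j

lemma m_lt_ma {p : Fin n} (hp : X.j ≤ p) : X.m p < X.m X.a :=
  X.hdec _ _ (lt_of_lt_of_le X.a_lt_j hp)

lemma ma_le_m {p : Fin n} (hp : p < X.j) : X.m X.a ≤ X.m p := by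
  have hpa : (p : ℕ) ≤ (X.a : ℕ) := by have := X.haj; have := Fin.lt_def.mp hp; omega
  rcases eq_or_lt_of_le hpa with h | h
  · exact le_of_eq (congrArg X.m (Fin.ext h.symm))
  · exact (X.hdec _ _ (Fin.lt_def.mpr h)).le

lemma mj_le_m {p : Fin n} (hp : p ≤ X.j) : X.m X.j ≤ X.m p := by
  rcases eq_or_lt_of_le hp with h | h
  · exact le_of_eq (congrArg X.m h.symm)
  · exact (X.hdec _ _ h).le

lemma Mcp_lb : X.m X.k0 + X.m X.j ≤ totalPower X.m X.s X.cp :=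
  pair_le_totalPower X.m X.hm X.s (ne_of_lt X.hk0) X.hk0c X.hsj

lemma Mcp_pos : 0 < totalPower X.m X.s X.cp :=
  lt_of_lt_of_le (by have := X.hm X.k0; have := X.hm X.j; linarith) X.Mcp_lb

lemma Mct_nonneg : 0 ≤ totalPower X.m X.s X.ct := totalPower_nonneg X.m X.hm X.s X.ct

lemma Hcp_val : X.H X.cp = X.R * totalPower X.m X.s X.cp := X.hH1 X.cp X.hne

lemma Hcp_pos : 0 < X.H X.cp := by
  rw [X.Hcp_val]; exact mul_pos X.hR X.Mcp_pos

lemma Hct_pos : 0 < X.H X.ct := by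
  rw [X.hH2]; exact mul_pos X.hR (by have := X.Mct_nonneg; have := X.hm X.a; linarith)

lemma s_mem {k : Fin n} (hk : X.j ≤ k) : X.s k = X.cp ∨ X.s k = X.ct := by
  rcases eq_or_lt_of_le hk with h | h
  · exact Or.inl (h ▸ X.hsj)
  · exact Or.inr (X.hsg k h)

/-- Third coins keep their original load under the invariant. -/
lemma inv_third {t : Fin n → C} (ht : X.Inv t) {c : C} (h1 : c ≠ X.cp) (h2 : c ≠ X.ct) :
    totalPower X.m t c = totalPower X.m X.s c := by
  unfold totalPower
  refine Finset.sum_congr rfl fun k _ => ?_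
  rcases lt_or_ge k X.j with hk | hk
  · rw [ht.1 k hk]
  · have h3 : t k ≠ c := by
      rcases ht.2.1 k hk with h | h <;> rw [h] <;> [exact fun hc => h1 hc.symm; exact fun hc => h2 hc.symm]
    have h4 : X.s k ≠ c := by
      rcases X.s_mem hk with h | h <;> rw [h] <;> [exact fun hc => h1 hc.symm; exact fun hc => h2 hc.symm]
    rw [if_neg h3, if_neg h4]

/-- Conservation of power between the two active coins. -/
lemma inv_conserve {t : Fin n → C} (ht : X.Inv t) :
    totalPower X.m t X.cp + totalPower X.m t X.ct
      = totalPower X.m X.s X.cp + totalPower X.m X.s X.ct := by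
  unfold totalPower
  rw [← Finset.sum_add_distrib, ← Finset.sum_add_distrib]
  refine Finset.sum_congr rfl fun k _ => ?_
  rcases lt_or_ge k X.j with hk | hk
  · rw [ht.1 k hk]
  · have hne := X.hne
    rcases ht.2.1 k hk with h | h <;> rcases X.s_mem hk with h' | h' <;>
      rw [h, h'] <;> simp [hne, Ne.symm hne]

lemma inv_cp_lb {t : Fin n → C} (ht : X.Inv t) :
    totalPower X.m X.s X.cp ≤ totalPower X.m t X.cp + X.m X.j := by
  have hmj : X.m X.j = ∑ k, if k = X.j then X.m k else 0 := by
    rw [Finset.sum_ite_eq' Finset.univ X.j X.m, if_pos (Finset.mem_univ _)]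
  rw [hmj]
  unfold totalPower
  rw [← Finset.sum_add_distrib]
  refine Finset.sum_le_sum fun k _ => ?_
  rcases lt_or_ge k X.j with hk | hk
  · rw [ht.1 k hk, if_neg (ne_of_lt hk)]
    simp
  · rcases eq_or_lt_of_le hk with h | h
    · rw [if_pos h.symm, ← h]
      have h1 : (0:ℝ) ≤ (if t X.j = X.cp then X.m X.j else 0) := by
        split <;> [exact (X.hm _).le; rfl]
      have h2 : (if X.s X.j = X.cp then X.m X.j else 0) ≤ X.m X.j := by
        split <;> [exact le_refl _; exact (X.hm _).le]
      linarith
    · rw [if_neg (X.hne.symm ∘ (X.hsg k h ▸ ·)), if_neg (ne_of_gt h)]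
      have : (0:ℝ) ≤ (if t k = X.cp then X.m k else 0) := by
        split <;> [exact (X.hm _).le; rfl]
      linarith

lemma inv_ct_lb {t : Fin n → C} (ht : X.Inv t) : X.m X.j ≤ totalPower X.m t X.ct :=
  le_totalPower X.m X.hm t ht.2.2.1


set_option maxHeartbeats 2000000 in
/-- Classification of better-response steps under the invariant. -/
lemma step {t : Fin n → C} {p : Fin n} {c : C} (ht : X.Inv t)
    (hb : betterStep X.m X.H t p c) :
    t p ≠ c ∧ X.j < p ∧ X.Inv (Function.update t p c) ∧
    ((t p = X.ct ∧ c = X.cp ∧ X.H X.ct * X.m p < X.psi t ∧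
        X.psi (Function.update t p c) = X.psi t - (X.H X.cp + X.H X.ct) * X.m p) ∨
     (t p = X.cp ∧ c = X.ct ∧ X.psi t < -(X.H X.cp * X.m p) ∧
        X.psi (Function.update t p c) = X.psi t + (X.H X.cp + X.H X.ct) * X.m p)) := by
  have hne' : t p ≠ c := by
    intro h
    rw [betterStep, ← h, Function.update_eq_self] at hb
    exact lt_irrefl _ hb
  have core := (better_iff X.m X.H t p c X.hm hne').mp hb
  set u := totalPower X.m t X.cp with hu_def
  set v := totalPower X.m t X.ct with hv_def
  set Mcp := totalPower X.m X.s X.cp with hMcp_def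
  set Mct := totalPower X.m X.s X.ct with hMct_def
  have ht4 : u ≤ Mcp := ht.2.2.2
  have ht3 : t X.j = X.ct := ht.2.2.1
  have hcons : u + v = Mcp + Mct := X.inv_conserve ht
  have hulb : Mcp ≤ u + X.m X.j := X.inv_cp_lb ht
  have hvlb : X.m X.j ≤ v := X.inv_ct_lb ht
  have hu0 : (0:ℝ) ≤ u := totalPower_nonneg X.m X.hm t X.cp
  have hMct0 : (0:ℝ) ≤ Mct := X.Mct_nonneg
  have hMcp0 : (0:ℝ) < Mcp := X.Mcp_pos
  have hR := X.hR
  have hmp := X.hm p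
  have hmj := X.hm X.j
  have hma := X.hm X.a
  have hja : X.m X.j < X.m X.a := X.mj_lt_ma
  have hpsit : X.psi t = X.H X.cp * v - X.H X.ct * u := rfl
  have mkInv : X.j < p → (c = X.cp ∨ c = X.ct) →
      totalPower X.m (Function.update t p c) X.cp ≤ Mcp → X.Inv (Function.update t p c) := by
    intro hpj hc h4
    refine ⟨fun k hk => ?_, fun k hk => ?_, ?_, h4⟩
    · rw [Function.update_of_ne (ne_of_lt (hk.trans hpj))]; exact ht.1 k hk
    · by_cases hkp : k = p
      · subst hkp; rw [Function.update_self]; exact hc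
      · rw [Function.update_of_ne hkp]; exact ht.2.1 k hk
    · rw [Function.update_of_ne (ne_of_lt hpj)]; exact ht3
  have hwpos : 0 < totalPower X.m t (t p) := lt_of_lt_of_le (X.hm p) (le_totalPower X.m X.hm t rfl)
  by_cases hc1 : c = X.ct
  · subst hc1
    by_cases htp : t p = X.cp
    · -- the move cp → ct
      rw [htp] at core
      have hcore' : Mcp * (v + X.m p) < (Mct + X.m X.a) * u := by
        rw [X.Hcp_val, X.hH2, mul_assoc, mul_assoc] at core
        exact lt_of_mul_lt_mul_left core hR.le
      have hpj : X.j < p := by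
        rcases lt_trichotomy p X.j with h | h | h
        · exfalso
          have hma_le := X.ma_le_m h
          nlinarith [hcore', mul_nonneg (sub_nonneg.2 ht4) hMct0,
            mul_nonneg (sub_nonneg.2 ht4) hMcp0.le,
            mul_nonneg (sub_nonneg.2 ht4) hma.le,
            mul_nonneg hMcp0.le (sub_nonneg.2 hma_le)]
        · exact absurd (htp.symm.trans (h ▸ ht3)) X.hne
        · exact h
      have h4v : totalPower X.m (Function.update t p X.ct) X.cp = u - X.m p := by
        rw [totalPower_update, htp, if_neg (Ne.symm X.hne), if_pos rfl]; ring
      have hpsiu : X.psi (Function.update t p X.ct)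
          = X.psi t + (X.H X.cp + X.H X.ct) * X.m p := by
        unfold Setup.psi
        rw [totalPower_update, totalPower_update, htp, if_pos rfl,
          if_neg X.hne, if_neg (Ne.symm X.hne), if_pos rfl]
        ring
      exact ⟨hne', hpj, mkInv hpj (Or.inr rfl) (by rw [h4v]; linarith),
        Or.inr ⟨htp, rfl, by linarith [core, hpsit], hpsiu⟩⟩
    · -- t p is a third coin: impossible
      exfalso
      have hplt : p < X.j := by
        rcases lt_or_ge p X.j with h | h
        · exact h
        · rcases ht.2.1 p h with h' | h' <;> [exact absurd h' htp; exact absurd h' hne']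
      have hma_le := X.ma_le_m hplt
      have hw : totalPower X.m t (t p) = totalPower X.m X.s (t p) := X.inv_third ht htp hne'
      rw [X.hH1 (t p) hne', X.hH2, ← hw] at core
      nlinarith [core, mul_nonneg (mul_pos hR hwpos).le
        (by linarith : (0:ℝ) ≤ v + X.m p - (Mct + X.m X.a))]
  · by_cases hc2 : c = X.cp
    · subst hc2
      by_cases htp : t p = X.ct
      · -- the move ct → cp
        rw [htp] at core
        have hcore' : (Mct + X.m X.a) * (u + X.m p) < Mcp * v := by
          rw [X.hH2, X.Hcp_val, mul_assoc, mul_assoc] at core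
          exact lt_of_mul_lt_mul_left core hR.le
        have hpj : X.j < p := by
          rcases lt_or_ge X.j p with h | h
          · exact h
          · exfalso
            have hmj_le : X.m X.j ≤ X.m p := X.mj_le_m h
            nlinarith [hcore',
              mul_nonneg (by linarith : (0:ℝ) ≤ Mct + X.m X.a)
                (by linarith : (0:ℝ) ≤ u + X.m p - Mcp),
              mul_nonneg hMcp0.le (by linarith : (0:ℝ) ≤ Mct + X.m X.j - v),
              mul_pos hMcp0 (by linarith : (0:ℝ) < X.m X.a - X.m X.j)]
        have hup : u + X.m p ≤ Mcp := by
          by_contra hcon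
          push_neg at hcon
          have hmpa : X.m p < X.m X.a := X.m_lt_ma hpj.le
          nlinarith [hcore',
            mul_lt_mul_of_pos_left (show v < Mct + X.m X.a by linarith) hMcp0,
            mul_nonneg (by linarith : (0:ℝ) ≤ Mct + X.m X.a)
              (by linarith : (0:ℝ) ≤ u + X.m p - Mcp)]
        have h4v : totalPower X.m (Function.update t p X.cp) X.cp = u + X.m p := by
          rw [totalPower_update, htp, if_pos rfl, if_neg (Ne.symm X.hne)]; ring
        have hpsiu : X.psi (Function.update t p X.cp)
            = X.psi t - (X.H X.cp + X.H X.ct) * X.m p := by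
          unfold Setup.psi
          rw [totalPower_update, totalPower_update, htp, if_neg X.hne,
            if_pos rfl, if_pos rfl, if_neg (Ne.symm X.hne)]
          ring
        exact ⟨hne', hpj, mkInv hpj (Or.inl rfl) (by rw [h4v]; exact hup),
          Or.inl ⟨htp, rfl, by linarith [core, hpsit], hpsiu⟩⟩
      · -- t p is a third coin: impossible
        exfalso
        have hplt : p < X.j := by
          rcases lt_or_ge p X.j with h | h
          · exact h
          · rcases ht.2.1 p h with h' | h' <;> [exact absurd h' hne'; exact absurd h' htp]
        have hma_le := X.ma_le_m hplt
        have hw : totalPower X.m t (t p) = totalPower X.m X.s (t p) := X.inv_third ht hne' htp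
        rw [X.hH1 (t p) htp, X.Hcp_val, ← hw] at core
        nlinarith [core, mul_nonneg (mul_pos hR hwpos).le
          (by linarith : (0:ℝ) ≤ u + X.m p - Mcp)]
    · -- destination is a third coin: impossible
      exfalso
      have hz : totalPower X.m t c = totalPower X.m X.s c := X.inv_third ht hc2 hc1
      have hz0 : (0:ℝ) ≤ totalPower X.m t c := totalPower_nonneg X.m X.hm t c
      rw [X.hH1 c hc1, ← hz] at core
      set z := totalPower X.m t c with hz_def
      by_cases htp1 : t p = X.cp
      · rw [htp1, X.Hcp_val, mul_assoc, mul_assoc] at core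
        have core' := lt_of_mul_lt_mul_left core hR.le
        nlinarith [core', mul_nonneg hz0 (by linarith : (0:ℝ) ≤ Mcp - u),
          mul_pos hMcp0 hmp]
      · by_cases htp2 : t p = X.ct
        · rw [htp2, X.hH2, mul_assoc, mul_assoc] at core
          have core' := lt_of_mul_lt_mul_left core hR.le
          nlinarith [core',
            mul_nonneg hz0 (by linarith : (0:ℝ) ≤ Mct + X.m X.a - v),
            mul_pos (by linarith : (0:ℝ) < Mct + X.m X.a) hmp]
        · have hw : totalPower X.m t (t p) = totalPower X.m X.s (t p) :=
            X.inv_third ht htp1 htp2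
          rw [X.hH1 (t p) htp2, ← hw, mul_assoc, mul_assoc] at core
          have core' := lt_of_mul_lt_mul_left core hR.le
          nlinarith [core', mul_pos hwpos hmp]

set_option maxHeartbeats 1000000 in
/-- At `s` itself the only better-response step is `j → ct`. -/
lemma forced {p : Fin n} {c : C} (hb : betterStep X.m X.H X.s p c) : p = X.j ∧ c = X.ct := by
  have hne' : X.s p ≠ c := by
    intro h
    rw [betterStep, ← h, Function.update_eq_self] at hb
    exact lt_irrefl _ hb
  have core := (better_iff X.m X.H X.s p c X.hm hne').mp hb
  set Mcp := totalPower X.m X.s X.cp with hMcp_def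
  set Mct := totalPower X.m X.s X.ct with hMct_def
  have hMct0 : (0:ℝ) ≤ Mct := X.Mct_nonneg
  have hMcp0 : (0:ℝ) < Mcp := X.Mcp_pos
  have hR := X.hR
  have hmp := X.hm p
  have hma := X.hm X.a
  have hwpos : 0 < totalPower X.m X.s (X.s p) :=
    lt_of_lt_of_le (X.hm p) (le_totalPower X.m X.hm X.s rfl)
  by_cases hc1 : c = X.ct
  · subst hc1
    by_cases htp : X.s p = X.cp
    · rw [htp, X.Hcp_val, X.hH2, mul_assoc, mul_assoc] at core
      have core' := lt_of_mul_lt_mul_left core hR.le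
      -- Mcp * (Mct + m p) < (Mct + m a) * Mcp, hence m p < m a, hence p = j
      have hpa : X.m p < X.m X.a := by nlinarith [core']
      have hpj : X.j ≤ p := by
        by_contra hcon
        push_neg at hcon
        exact absurd (X.ma_le_m hcon) (not_le.mpr hpa)
      rcases eq_or_lt_of_le hpj with h | h
      · exact ⟨h.symm, rfl⟩
      · exact absurd (htp.symm.trans (X.hsg p h)) X.hne
    · exfalso
      rw [X.hH1 (X.s p) hne', X.hH2, mul_assoc, mul_assoc] at core
      have core' := lt_of_mul_lt_mul_left core hR.le
      have hpa : X.m p < X.m X.a := by nlinarith [core', hwpos]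
      have hpj : X.j ≤ p := by
        by_contra hcon
        push_neg at hcon
        exact absurd (X.ma_le_m hcon) (not_le.mpr hpa)
      rcases X.s_mem hpj with h | h <;> [exact htp h; exact hne' h]
  · exfalso
    by_cases hc2 : c = X.cp
    · subst hc2
      by_cases htp : X.s p = X.ct
      · rw [htp, X.hH2, X.Hcp_val, mul_assoc, mul_assoc] at core
        have core' := lt_of_mul_lt_mul_left core hR.le
        nlinarith [core', mul_pos hMcp0 hmp, mul_pos hma hmp]
      · have hw := X.hH1 (X.s p) htp
        rw [hw, X.Hcp_val, mul_assoc, mul_assoc] at core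
        have core' := lt_of_mul_lt_mul_left core hR.le
        nlinarith [core', hwpos, hmp]
    · have hz0 : (0:ℝ) ≤ totalPower X.m X.s c := totalPower_nonneg X.m X.hm X.s c
      rw [X.hH1 c hc1] at core
      set z := totalPower X.m X.s c with hz_def
      by_cases htp1 : X.s p = X.cp
      · rw [htp1, X.Hcp_val, mul_assoc, mul_assoc] at core
        have core' := lt_of_mul_lt_mul_left core hR.le
        nlinarith [core', mul_pos hMcp0 hmp]
      · by_cases htp2 : X.s p = X.ct
        · rw [htp2, X.hH2, mul_assoc, mul_assoc] at core
          have core' := lt_of_mul_lt_mul_left core hR.le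
          nlinarith [core', mul_nonneg hma.le hz0,
            mul_pos (by linarith : (0:ℝ) < Mct + X.m X.a) hmp]
        · rw [X.hH1 (X.s p) htp2, mul_assoc, mul_assoc] at core
          have core' := lt_of_mul_lt_mul_left core hR.le
          nlinarith [core', mul_pos hwpos hmp]

/-- The first step `j → ct` is indeed a better-response step at `s`. -/
lemma first_better : betterStep X.m X.H X.s X.j X.ct := by
  have hne' : X.s X.j ≠ X.ct := by rw [X.hsj]; exact X.hne
  rw [better_iff X.m X.H X.s X.j X.ct X.hm hne', X.hsj, X.Hcp_val, X.hH2]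
  have hMcp0 := X.Mcp_pos
  have hja := X.mj_lt_ma
  have hR := X.hR
  nlinarith [mul_pos hR hMcp0, mul_pos (mul_pos hR hMcp0) (sub_pos.2 hja)]

/-- The configuration after the first forced step satisfies the invariant. -/
lemma inv_first : X.Inv (Function.update X.s X.j X.ct) := by
  refine ⟨fun k hk => Function.update_of_ne (ne_of_lt hk) _ _, fun k hk => ?_, ?_, ?_⟩
  · rcases eq_or_lt_of_le hk with h | h
    · rw [← h, Function.update_self]; exact Or.inr rfl
    · rw [Function.update_of_ne (ne_of_gt h)]; exact Or.inr (X.hsg k h)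
  · rw [Function.update_self]
  · rw [totalPower_update, X.hsj, if_neg (Ne.symm X.hne), if_pos rfl]
    have := X.hm X.j
    linarith

/-- Any reachable configuration is either `s` or satisfies the invariant. -/
lemma reach_inv {s' : Fin n → C}
    (h : Relation.ReflTransGen
      (fun t t' => ∃ p c, betterStep X.m X.H t p c ∧ t' = Function.update t p c) X.s s') :
    s' = X.s ∨ X.Inv s' := by
  induction h with
  | refl => exact Or.inl rfl
  | tail hst hstep ih =>
    obtain ⟨p, c, hbet, rfl⟩ := hstep
    rcases ih with h' | hInv
    · rw [h']
      obtain ⟨rfl, rfl⟩ := X.forced (h' ▸ hbet)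
      exact Or.inr X.inv_first
    · exact Or.inr (X.step hInv hbet).2.2.1

set_option maxHeartbeats 2000000 in
/-- Better-response learning from `s` terminates. -/
lemma terminates (f : ℕ → Fin n → C) (hf0 : f 0 = X.s)
    (hstep : ∀ k, ∃ p c, betterStep X.m X.H (f k) p c ∧ f (k+1) = Function.update (f k) p c) :
    False := by
  classical
  choose pf cf hb hu using hstep
  have h0 : pf 0 = X.j ∧ cf 0 = X.ct := by
    have h := hb 0; rw [hf0] at h; exact X.forced h
  have hInv1 : X.Inv (f 1) := by
    rw [hu 0, hf0, h0.1, h0.2]; exact X.inv_first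
  have hInv : ∀ k, 1 ≤ k → X.Inv (f k) := by
    intro k hk
    induction k with
    | zero => omega
    | succ k ih =>
      rcases Nat.lt_or_ge k 1 with h | h
      · have hk1 : k = 0 := by omega
        rw [hk1]; exact hInv1
      · rw [hu k]
        exact (X.step (ih h) (hb k)).2.2.1
  have hHcp := X.Hcp_pos
  have hHct := X.Hct_pos
  have key : ∀ x y : ℕ, x < y → f (x+1) = f (y+1) → False := by
    intro x y hxy hfe
    set K := x + 1 with hK
    set L := y + 1 with hL
    have hKL : K < L := by omega
    have hK1 : 1 ≤ K := by omega
    -- the set of movers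
    set M : Finset (Fin n) := (Finset.Ico K L).image pf with hM
    have hMne : M.Nonempty := ⟨pf K, Finset.mem_image_of_mem pf (Finset.mem_Ico.mpr ⟨le_refl K, hKL⟩)⟩
    set pstar := M.min' hMne with hpstar
    have hms := X.hm pstar
    obtain ⟨i0, hi0, hi0p⟩ := Finset.mem_image.mp (M.min'_mem hMne)
    have hsmall : ∀ i, K ≤ i → i < L → pf i ≠ pstar → X.m (pf i) < X.m pstar := by
      intro i h1 h2 hnep
      refine X.hdec _ _ (lt_of_le_of_ne ?_ (Ne.symm hnep))
      exact M.min'_le _ (Finset.mem_image_of_mem pf (Finset.mem_Ico.mpr ⟨h1, h2⟩))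
    have hconst : ∀ i i' : ℕ, K ≤ i → i ≤ i' →
        (∀ z, i ≤ z → z < i' → pf z ≠ pstar) → f i' pstar = f i pstar := by
      intro i i' hKi hii'
      induction i', hii' using Nat.le_induction with
      | base => intro _; rfl
      | succ i2 hi2 ih =>
        intro hno
        rw [hu i2, Function.update_of_ne (Ne.symm (hno i2 hi2 (Nat.lt_succ_self i2)))]
        exact ih fun z hz1 hz2 => hno z hz1 (Nat.lt_succ_of_lt hz2)
    have hex : ∃ i, K ≤ i ∧ i < L ∧ pf i = pstar :=
      ⟨i0, (Finset.mem_Ico.mp hi0).1, (Finset.mem_Ico.mp hi0).2, hi0p⟩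
    set i1 := Nat.find hex with hi1def
    obtain ⟨hi1K, hi1L, hi1p⟩ := Nat.find_spec hex
    have hno1 : ∀ z, K ≤ z → z < i1 → pf z ≠ pstar := by
      intro z h1 h2 hp
      exact Nat.find_min hex h2 ⟨h1, by omega, hp⟩
    have hD1 := X.step (hInv i1 (by omega)) (hb i1)
    have hstep1 : f i1 pstar ≠ cf i1 := hi1p ▸ hD1.1
    have hex2 : ∃ i, i1 < i ∧ i < L ∧ pf i = pstar := by
      by_contra hcon
      push_neg at hcon
      have e1 : f L pstar = f (i1+1) pstar :=
        hconst (i1+1) L (by omega) (by omega) fun z hz1 hz2 => hcon z (by omega) hz2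
      have e2 : f (i1+1) pstar = cf i1 := by
        rw [hu i1, ← hi1p, Function.update_self]
      have e3 : f i1 pstar = f K pstar := by
        rw [hconst K i1 (le_refl K) hi1K hno1]
      apply hstep1
      rw [e3]
      have : f K pstar = f L pstar := by rw [hfe]
      rw [this, e1, e2]
    set i2 := Nat.find hex2 with hi2def
    obtain ⟨hi21, hi2L, hi2p⟩ := Nat.find_spec hex2
    have hno2 : ∀ z, i1 < z → z < i2 → pf z ≠ pstar := by
      intro z h1 h2 hp
      exact Nat.find_min hex2 h2 ⟨h1, by omega, hp⟩
    have hcoin : f i2 pstar = cf i1 := by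
      rw [hconst (i1+1) i2 (by omega) (by omega)
        (fun z hz1 hz2 => hno2 z (by omega) hz2)]
      rw [hu i1, ← hi1p, Function.update_self]
    have hD2 := X.step (hInv i2 (by omega)) (hb i2)
    rcases hD1.2.2.2 with ⟨hA1, hA2, hA3, hA4⟩ | ⟨hB1, hB2, hB3, hB4⟩
    · -- p* moved ct → cp at i1
      rw [← hu i1] at hA4
      rw [hi1p] at hA3 hA4
      have hbound : ∀ i, i1 + 1 ≤ i → i ≤ i2 → -(X.H X.cp * X.m pstar) < X.psi (f i) := by
        intro i hi
        induction i, hi using Nat.le_induction with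
        | base =>
          intro _
          rw [hA4]
          nlinarith [hA3]
        | succ i hi ih =>
          intro hlt
          have hIH := ih (by omega)
          have hq : pf i ≠ pstar := hno2 i (by omega) (by omega)
          have hql : X.m (pf i) < X.m pstar := hsmall i (by omega) (by omega) hq
          have hmq := X.hm (pf i)
          have hD := X.step (hInv i (by omega)) (hb i)
          rcases hD.2.2.2 with ⟨h1, h2, h3, h4⟩ | ⟨h1, h2, h3, h4⟩ <;> rw [← hu i] at h4
          · nlinarith [h3, mul_lt_mul_of_pos_left hql hHcp]
          · nlinarith [hIH, mul_pos (add_pos hHcp hHct) hmq]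
      rcases hD2.2.2.2 with ⟨g1, g2, g3, g4⟩ | ⟨g1, g2, g3, g4⟩
      · rw [hi2p, hcoin, hA2] at g1
        exact X.hne g1
      · rw [hi2p] at g3
        exact absurd g3 (not_lt.mpr (hbound i2 (by omega) (le_refl _)).le)
    · -- p* moved cp → ct at i1
      rw [← hu i1] at hB4
      rw [hi1p] at hB3 hB4
      have hbound : ∀ i, i1 + 1 ≤ i → i ≤ i2 → X.psi (f i) < X.H X.ct * X.m pstar := by
        intro i hi
        induction i, hi using Nat.le_induction with
        | base =>
          intro _
          rw [hB4]
          nlinarith [hB3]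
        | succ i hi ih =>
          intro hlt
          have hIH := ih (by omega)
          have hq : pf i ≠ pstar := hno2 i (by omega) (by omega)
          have hql : X.m (pf i) < X.m pstar := hsmall i (by omega) (by omega) hq
          have hmq := X.hm (pf i)
          have hD := X.step (hInv i (by omega)) (hb i)
          rcases hD.2.2.2 with ⟨h1, h2, h3, h4⟩ | ⟨h1, h2, h3, h4⟩ <;> rw [← hu i] at h4
          · nlinarith [hIH, mul_pos (add_pos hHcp hHct) hmq]
          · nlinarith [h3, mul_lt_mul_of_pos_left hql hHct]
      rcases hD2.2.2.2 with ⟨g1, g2, g3, g4⟩ | ⟨g1, g2, g3, g4⟩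
      · rw [hi2p] at g3
        exact absurd g3 (not_lt.mpr (hbound i2 (by omega) (le_refl _)).le)
      · rw [hi2p, hcoin, hB2] at g1
        exact X.hne g1.symm
  obtain ⟨x, y, hxy, hfe⟩ := Finite.exists_ne_map_eq_of_infinite (fun k : ℕ => f (k+1))
  rcases hxy.lt_or_gt with h | h
  · exact key x y h hfe
  · exact key y x h hfe.symm

end Setup
end Stage16

/-- in stage `i > 1` with designed rewards `H_i(s)`, every better response
learning starting from `s ∈ T_i \ {s_i}` terminates, and every stable configuration `s'`
it reaches lies in `T_i`, agrees with `s` on all miners below the mover `j = m_i(s)`,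
and has the mover on `s_f.p_i`. -/
theorem stage_learning_converges {C : Type*} [Fintype C] [DecidableEq C] [Nonempty C]
    {n : ℕ} (m : Fin n → ℝ) (F : C → ℝ) (s_f : Fin n → C)
    (hm : ∀ p, 0 < m p) (hF : ∀ c, 0 < F c)
    (hdec : ∀ k l : Fin n, k < l → m l < m k)
    (hsf : stableConfig m F s_f)
    (iprev icur : Fin n) (hstage : (iprev : ℕ) + 1 = (icur : ℕ))
    (hcoins : s_f iprev ≠ s_f icur)
    (s : Fin n → C)
    (hT₁ : ∀ k, k < icur → s k = s_f k)
    (hT₂ : ∀ k, icur ≤ k → s k = s_f icur ∨ s k = s_f iprev)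
    (j a : Fin n) (hj₀ : icur ≤ j) (hj₁ : s j = s_f iprev)
    (hj₂ : ∀ l, j < l → s l = s_f icur) (ha : (a : ℕ) + 1 = (j : ℕ))
    (H : C → ℝ) (hH : H = designedReward m F s (s_f icur) (m a)) :
    (∀ f : ℕ → Fin n → C, f 0 = s →
        ¬ ∀ k, ∃ p c, betterStep m H (f k) p c ∧ f (k + 1) = Function.update (f k) p c) ∧
    (∀ s' : Fin n → C,
        Relation.ReflTransGen
          (fun t t' => ∃ p c, betterStep m H t p c ∧ t' = Function.update t p c) s s' →
        stableConfig m H s' →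
          ((∀ k, k < icur → s' k = s_f k) ∧
            (∀ k, icur ≤ k → s' k = s_f icur ∨ s' k = s_f iprev) ∧
            (∀ k, k < j → s' k = s k) ∧
            s' j = s_f icur)) := by
  classical
  have hic : iprev < icur := Fin.lt_def.mpr (by omega)
  have hk0 : iprev < j := lt_of_lt_of_le hic hj₀
  have hk0c : s iprev = s_f iprev := hT₁ iprev hic
  have hR : 0 < maxRPU m F s := by
    have h1 : 0 < RPU m F s (s iprev) := by
      unfold RPU
      exact div_pos (hF _) (lt_of_lt_of_le (hm iprev) (Stage16.le_totalPower m hm s rfl))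
    exact lt_of_lt_of_le h1 (Finset.le_sup' _ (Finset.mem_univ (s iprev)))
  have hH1 : ∀ c, c ≠ s_f icur → H c = maxRPU m F s * totalPower m s c := by
    intro c hc; rw [hH]; unfold designedReward; rw [if_neg hc]
  have hH2 : H (s_f icur) = maxRPU m F s * (totalPower m s (s_f icur) + m a) := by
    rw [hH]; unfold designedReward; rw [if_pos rfl]
  let X : Stage16.Setup C n :=
    { m := m, H := H, s := s, j := j, a := a, cp := s_f iprev, ct := s_f icur,
      R := maxRPU m F s, k0 := iprev, hm := hm, hdec := hdec, haj := ha,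
      hne := hcoins, hsj := hj₁, hsg := hj₂, hk0 := hk0, hk0c := hk0c,
      hR := hR, hH1 := hH1, hH2 := hH2 }
  constructor
  · intro f hf0 hsteps
    exact X.terminates f hf0 hsteps
  · intro s' hreach hstable
    rcases X.reach_inv hreach with h | hInv
    · exact absurd (show betterStep m H s' j (s_f icur) by rw [h]; exact X.first_better)
        (hstable j (s_f icur))
    · obtain ⟨h1, h2, h3, h4⟩ := hInv
      refine ⟨fun k hk => ?_, fun k hk => ?_, h1, h3⟩
      · rw [h1 k (lt_of_lt_of_le hk hj₀)]; exact hT₁ k hk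
      · rcases lt_or_ge k j with hkj | hkj
        · rw [h1 k hkj]; exact hT₂ k hk
        · exact (h2 k hkj).symm
end
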